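/- With W(x) = 2((1 + x₄)² + x₁² + x₂² + x₃²)^{−1} on the closed upper half-space of ℝ⁴, one has lim_{R→∞} (log R)^{−1} ∫_{B⁴₊(0,R)} W(x)² dx = 4π², i.e. the L² mass of the bubble on the half-ball of radius R diverges logarithmically with this precise rate. -/

import Mathlib

open MeasureTheory Real Set Filter Topology

noncomputable section

/-- The standard bubble `W_{1,0}` for `n = 3`, `γ = 1/2`:
`W(x) = 2((1 + x₄)² + x₁² + x₂² + x₃²)⁻¹`. -/
def Wb (x : Fin 4 → ℝ) : ℝ :=
  2 * ((1 + x 3) ^ 2 + (x 0) ^ 2 + (x 1) ^ 2 + (x 2) ^ 2)⁻¹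

/-- The upper half-ball `B⁴₊(0,R)`. -/
def hBall (R : ℝ) : Set (Fin 4 → ℝ) := {x | (∑ i, (x i) ^ 2) < R ^ 2 ∧ 0 < x 3}

namespace Stmt18

/-- Radial comparison function. -/
def G0 (x : Fin 4 → ℝ) : ℝ := 4 * ((1 + ∑ i, (x i) ^ 2) ^ 2)⁻¹

/-- Integrable majorant of the error. -/
def Hf (x : Fin 4 → ℝ) : ℝ := 128 * ((1 + Real.sqrt (∑ i, (x i) ^ 2)) ^ 5)⁻¹

/-- Full ball. -/
def bigB (R : ℝ) : Set (Fin 4 → ℝ) := {x | (∑ i, (x i) ^ 2) < R ^ 2}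

lemma measurableSet_bigB (R : ℝ) : MeasurableSet (bigB R) :=
  measurableSet_lt (f := fun x : Fin 4 → ℝ => ∑ i, (x i) ^ 2) (by fun_prop) measurable_const

lemma measurableSet_hBall (R : ℝ) : MeasurableSet (hBall R) := by
  have h1 : MeasurableSet {x : Fin 4 → ℝ | (∑ i, (x i) ^ 2) < R ^ 2} :=
    measurableSet_lt (f := fun x : Fin 4 → ℝ => ∑ i, (x i) ^ 2) (by fun_prop) measurable_const
  have h2 : MeasurableSet {x : Fin 4 → ℝ | 0 < x 3} :=
    measurableSet_lt measurable_const (by fun_prop)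
  exact h1.inter h2

lemma bigB_subset_ball (R : ℝ) : bigB R ⊆ Metric.ball (0 : Fin 4 → ℝ) (|R| + 1) := by
  intro x hx
  rw [Metric.mem_ball, dist_zero_right]
  rw [pi_norm_lt_iff (by positivity)]
  intro i
  have h1 : (x i) ^ 2 ≤ ∑ j, (x j) ^ 2 :=
    Finset.single_le_sum (f := fun j => (x j) ^ 2) (fun j _ => sq_nonneg _) (Finset.mem_univ i)
  have h2 : (x i) ^ 2 < R ^ 2 := lt_of_le_of_lt h1 hx
  have : |x i| < |R| + 1 := by
    nlinarith [abs_nonneg (x i), abs_nonneg R, sq_abs (x i), sq_abs R]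
  simpa [Real.norm_eq_abs] using this

lemma volume_bigB_lt_top (R : ℝ) : volume (bigB R) < ⊤ :=
  lt_of_le_of_lt (measure_mono (bigB_subset_ball R)) measure_ball_lt_top

lemma volume_hBall_lt_top (R : ℝ) : volume (hBall R) < ⊤ :=
  lt_of_le_of_lt (measure_mono (fun x hx => hx.1)) (volume_bigB_lt_top R)

lemma G0_nonneg (x : Fin 4 → ℝ) : 0 ≤ G0 x := by unfold G0; positivity

lemma G0_le_four (x : Fin 4 → ℝ) : G0 x ≤ 4 := by
  unfold G0
  have h : (1:ℝ) ≤ (1 + ∑ i, (x i) ^ 2) ^ 2 := by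
    have : (0:ℝ) ≤ ∑ i, (x i) ^ 2 := by positivity
    nlinarith
  have : ((1 + ∑ i, (x i) ^ 2) ^ 2)⁻¹ ≤ 1 := by
    rw [inv_le_one_iff₀]; right; exact h
  linarith

lemma measurable_G0 : Measurable G0 := by unfold G0; fun_prop

lemma measurable_Wb_sq : Measurable (fun x => Wb x ^ 2) := by unfold Wb; fun_prop

lemma measurable_Hf : Measurable Hf := by unfold Hf; fun_prop

lemma integrableOn_G0 {s : Set (Fin 4 → ℝ)} (hs : volume s < ⊤) : IntegrableOn G0 s := by
  apply Measure.integrableOn_of_bounded hs.ne measurable_G0.aestronglyMeasurable (M := 4)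
  filter_upwards with x
  rw [Real.norm_eq_abs, abs_of_nonneg (G0_nonneg x)]
  exact G0_le_four x

lemma Wb_sq_le_G0 {x : Fin 4 → ℝ} (hx : 0 < x 3) : Wb x ^ 2 ≤ G0 x := by
  have hs : ∑ i, (x i) ^ 2 = x 0 ^ 2 + x 1 ^ 2 + x 2 ^ 2 + x 3 ^ 2 := by
    simp [Fin.sum_univ_four]
  set s : ℝ := ∑ i, (x i) ^ 2 with hsdef
  have hs0 : (0:ℝ) ≤ s := by positivity
  have ha : (1 + x 3) ^ 2 + (x 0) ^ 2 + (x 1) ^ 2 + (x 2) ^ 2 = 1 + 2 * x 3 + s := by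
    rw [hs]; ring
  unfold Wb G0
  rw [ha, ← hsdef, mul_pow, inv_pow]
  have h : ((1 + 2 * x 3 + s) ^ 2)⁻¹ ≤ ((1 + s) ^ 2)⁻¹ := by
    apply inv_anti₀ (by positivity)
    nlinarith
  have h2 : (2:ℝ) ^ 2 = 4 := by norm_num
  rw [h2]
  linarith

lemma Hf_nonneg (x : Fin 4 → ℝ) : 0 ≤ Hf x := by
  unfold Hf
  have : (0:ℝ) ≤ Real.sqrt (∑ i, (x i) ^ 2) := Real.sqrt_nonneg _
  positivity

lemma aux_alg {x3 s r : ℝ} (hx : 0 < x3) (hs0 : 0 ≤ s) (hr0 : 0 ≤ r)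
    (hrs : r ^ 2 = s) (hx3r : x3 ≤ r) :
    4 * ((1 + s) ^ 2)⁻¹ - 4 * ((1 + 2 * x3 + s) ^ 2)⁻¹ ≤ 128 * ((1 + r) ^ 5)⁻¹ := by
  set a : ℝ := 1 + 2 * x3 + s with hadef
  set b : ℝ := 1 + s with hbdef
  have hb1 : (1:ℝ) ≤ b := by simp only [hbdef]; linarith
  have hba : b ≤ a := by simp only [hadef, hbdef]; nlinarith
  have ha0 : (0:ℝ) < a := by simp only [hadef]; nlinarith
  have hb0 : (0:ℝ) < b := by linarith
  have key : 4 * (b ^ 2)⁻¹ - 4 * (a ^ 2)⁻¹ = 4 * (a ^ 2 - b ^ 2) / (a ^ 2 * b ^ 2) := by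
    field_simp
  rw [key, inv_eq_one_div, mul_one_div, div_le_div_iff₀ (by positivity) (by positivity)]
  have hab2 : a - b = 2 * x3 := by simp only [hadef, hbdef]; ring
  calc 4 * (a ^ 2 - b ^ 2) * (1 + r) ^ 5 ≤ 4 * (4 * r * a) * (1 + r) ^ 5 := by
        have : a ^ 2 - b ^ 2 ≤ 4 * r * a := by nlinarith
        have h5 : (0:ℝ) ≤ (1 + r) ^ 5 := by positivity
        nlinarith
    _ = 16 * a * (r * (1 + r) ^ 5) := by ring
    _ ≤ 16 * a * ((1 + r) * (1 + r) ^ 5) := by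
        have : r * (1 + r) ^ 5 ≤ (1 + r) * (1 + r) ^ 5 := by
          apply mul_le_mul_of_nonneg_right (by linarith) (by positivity)
        nlinarith
    _ = 16 * a * ((1 + r) ^ 2) ^ 3 := by ring
    _ ≤ 16 * a * (2 * b) ^ 3 := by
        have h2b : (1 + r) ^ 2 ≤ 2 * b := by simp only [hbdef]; nlinarith [sq_nonneg (1 - r), hrs]
        have : ((1 + r) ^ 2) ^ 3 ≤ (2 * b) ^ 3 := by
          apply pow_le_pow_left₀ (by positivity) h2b
        nlinarith
    _ = 128 * (a * b ^ 2) * b := by ring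
    _ ≤ 128 * (a * b ^ 2) * a := by
        apply mul_le_mul_of_nonneg_left hba (by positivity)
    _ = 128 * (a ^ 2 * b ^ 2) := by ring

lemma G0_sub_Wb_sq_le_Hf {x : Fin 4 → ℝ} (hx : 0 < x 3) : G0 x - Wb x ^ 2 ≤ Hf x := by
  have hsum : ∑ i, (x i) ^ 2 = x 0 ^ 2 + x 1 ^ 2 + x 2 ^ 2 + x 3 ^ 2 := by
    simp [Fin.sum_univ_four]
  have hs0 : (0:ℝ) ≤ ∑ i, (x i) ^ 2 := by positivity
  have hWb : Wb x ^ 2 = 4 * ((1 + 2 * x 3 + ∑ i, (x i) ^ 2) ^ 2)⁻¹ := by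
    unfold Wb
    have h : (1 + x 3) ^ 2 + (x 0) ^ 2 + (x 1) ^ 2 + (x 2) ^ 2
        = 1 + 2 * x 3 + ∑ i, (x i) ^ 2 := by rw [hsum]; ring
    rw [h, mul_pow, inv_pow]; norm_num
  have hx3r : x 3 ≤ Real.sqrt (∑ i, (x i) ^ 2) := by
    rw [Real.le_sqrt hx.le hs0]
    nlinarith [sq_nonneg (x 0), sq_nonneg (x 1), sq_nonneg (x 2)]
  rw [hWb]
  exact aux_alg hx hs0 (Real.sqrt_nonneg _) (Real.sq_sqrt hs0) hx3r



abbrev E4 := EuclideanSpace ℝ (Fin 4)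

lemma E4_norm_sq (y : E4) : ‖y‖ ^ 2 = ∑ i, (y i) ^ 2 := by
  rw [EuclideanSpace.norm_eq]
  simp only [Real.norm_eq_abs, sq_abs]
  exact Real.sq_sqrt (by positivity)

lemma integrable_Hf : Integrable Hf := by
  have h := EuclideanSpace.volume_preserving_symm_measurableEquiv_toLp (Fin 4)
  rw [← h.integrable_comp_emb ((MeasurableEquiv.toLp 2 (Fin 4 → ℝ)).symm).measurableEmbedding]
  have heq : (Hf ∘ ((MeasurableEquiv.toLp 2 (Fin 4 → ℝ)).symm))
      = fun y : E4 => 128 * ((1 + ‖y‖) ^ 5)⁻¹ := by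
    funext y
    have : Hf (((MeasurableEquiv.toLp 2 (Fin 4 → ℝ)).symm) y)
        = 128 * ((1 + Real.sqrt (∑ i, (y i) ^ 2)) ^ 5)⁻¹ := rfl
    rw [Function.comp_apply, this, EuclideanSpace.norm_eq]
    simp only [Real.norm_eq_abs, sq_abs]
  rw [heq]
  have hmain : Integrable (fun y : E4 => ((1:ℝ) + ‖y‖) ^ (-(5:ℝ))) := by
    apply integrable_one_add_norm (E := E4)
    rw [finrank_euclideanSpace_fin]; norm_num
  have : (fun y : E4 => 128 * ((1 + ‖y‖) ^ 5)⁻¹)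
      = fun y : E4 => 128 * ((1:ℝ) + ‖y‖) ^ (-(5:ℝ)) := by
    funext y
    rw [Real.rpow_neg (by positivity), ← Real.rpow_natCast (1 + ‖y‖) 5]
    norm_num
  rw [this]
  exact hmain.const_mul 128

lemma cont_g : Continuous (fun r : ℝ => r ^ 3 * (4 * ((1 + r ^ 2) ^ 2)⁻¹)) := by
  have h1 : Continuous (fun r : ℝ => ((1 + r ^ 2) ^ 2)) := by continuity
  exact (continuous_pow 3).mul (continuous_const.mul (h1.inv₀ (fun r => by positivity)))

lemma hasDeriv_anti (r : ℝ) :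
    HasDerivAt (fun r : ℝ => 2 * Real.log (1 + r ^ 2) + 2 * (1 + r ^ 2)⁻¹)
      (r ^ 3 * (4 * ((1 + r ^ 2) ^ 2)⁻¹)) r := by
  have hpos : (0:ℝ) < 1 + r ^ 2 := by positivity
  have hbase : HasDerivAt (fun r : ℝ => 1 + r ^ 2) (2 * r) r := by
    simpa using ((hasDerivAt_pow 2 r).const_add 1)
  have hlog : HasDerivAt (fun r : ℝ => Real.log (1 + r ^ 2)) (2 * r / (1 + r ^ 2)) r :=
    hbase.log hpos.ne'
  have hinv : HasDerivAt (fun r : ℝ => (1 + r ^ 2)⁻¹) (-(2 * r) / (1 + r ^ 2) ^ 2) r :=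
    hbase.inv hpos.ne'
  have := (hlog.const_mul 2).add (hinv.const_mul 2)
  refine this.congr_deriv ?_
  field_simp
  ring

lemma oneDim (R : ℝ) (hR : 0 < R) :
    ∫ r in Ioi (0:ℝ), r ^ 3 • (if r < R then 4 * ((1 + r ^ 2) ^ 2)⁻¹ else 0)
      = 2 * Real.log (1 + R ^ 2) + 2 * (1 + R ^ 2)⁻¹ - 2 := by
  have hind : ∀ r : ℝ, r ^ 3 • (if r < R then 4 * ((1 + r ^ 2) ^ 2)⁻¹ else 0)
      = (Iio R).indicator (fun r => r ^ 3 * (4 * ((1 + r ^ 2) ^ 2)⁻¹)) r := by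
    intro r
    by_cases h : r < R <;> simp [Set.indicator_apply, h, smul_eq_mul]
  simp only [hind]
  rw [integral_indicator measurableSet_Iio, Measure.restrict_restrict measurableSet_Iio,
    Set.Iio_inter_Ioi]
  rw [← integral_Ioc_eq_integral_Ioo, ← intervalIntegral.integral_of_le hR.le]
  have hFTC := intervalIntegral.integral_eq_sub_of_hasDerivAt
    (f := fun r : ℝ => 2 * Real.log (1 + r ^ 2) + 2 * (1 + r ^ 2)⁻¹)
    (f' := fun r : ℝ => r ^ 3 * (4 * ((1 + r ^ 2) ^ 2)⁻¹))
    (a := 0) (b := R)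
    (fun r _ => hasDeriv_anti r)
    (cont_g.intervalIntegrable 0 R)
  rw [hFTC]
  norm_num

lemma vol_ball_E4 : (volume (Metric.ball (0 : E4) 1)).toReal = π ^ 2 / 2 := by
  rw [EuclideanSpace.volume_ball]
  have hcard : (Fintype.card (Fin 4)) = 4 := by simp
  rw [hcard]
  have hG : Real.Gamma ((4:ℕ) / 2 + 1) = 2 := by
    have h3 : ((4:ℕ):ℝ) / 2 + 1 = (2:ℕ) + 1 := by norm_num
    rw [h3, Real.Gamma_nat_eq_factorial]
    norm_num
  have hs : Real.sqrt π ^ 4 = π ^ 2 := by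
    have : Real.sqrt π ^ 4 = (Real.sqrt π ^ 2) ^ 2 := by ring
    rw [this, Real.sq_sqrt Real.pi_nonneg]
  rw [hG, hs]
  simp
  positivity

lemma integral_bigB (R : ℝ) (hR : 0 < R) :
    ∫ x in bigB R, G0 x = 4 * π ^ 2 * (Real.log (1 + R ^ 2) + (1 + R ^ 2)⁻¹ - 1) := by
  have hmeas : MeasurableSet (bigB R) := measurableSet_bigB R
  have h := EuclideanSpace.volume_preserving_symm_measurableEquiv_toLp (Fin 4)
  have he := ((MeasurableEquiv.toLp 2 (Fin 4 → ℝ)).symm).measurableEmbedding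
  have heq : ∀ y : E4, (bigB R).indicator G0 (((MeasurableEquiv.toLp 2 (Fin 4 → ℝ)).symm) y)
      = (fun t : ℝ => if t < R then 4 * ((1 + t ^ 2) ^ 2)⁻¹ else 0) ‖y‖ := by
    intro y
    have hmem : (((MeasurableEquiv.toLp 2 (Fin 4 → ℝ)).symm) y ∈ bigB R) ↔ ‖y‖ < R := by
      show (∑ i, (y i) ^ 2 < R ^ 2) ↔ _
      rw [← E4_norm_sq y]
      constructor
      · intro hlt; nlinarith [norm_nonneg y]
      · intro hlt; nlinarith [norm_nonneg y]
    have hGval : G0 (((MeasurableEquiv.toLp 2 (Fin 4 → ℝ)).symm) y) = 4 * ((1 + ‖y‖ ^ 2) ^ 2)⁻¹ := by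
      show (4 : ℝ) * ((1 + ∑ i, (y i) ^ 2) ^ 2)⁻¹ = _
      rw [E4_norm_sq y]
    by_cases hy : ‖y‖ < R
    · rw [Set.indicator_of_mem (hmem.2 hy), hGval]; simp [hy]
    · rw [Set.indicator_of_notMem (fun hc => hy (hmem.1 hc))]; simp [hy]
  have hpolar := integral_fun_norm_addHaar (volume : Measure E4)
    (fun t : ℝ => if t < R then 4 * ((1 + t ^ 2) ^ 2)⁻¹ else 0)
  calc ∫ x in bigB R, G0 x = ∫ x, (bigB R).indicator G0 x := (integral_indicator hmeas).symm
    _ = ∫ y : E4, (bigB R).indicator G0 (((MeasurableEquiv.toLp 2 (Fin 4 → ℝ)).symm) y) :=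
        (h.integral_comp he _).symm
    _ = ∫ y : E4, (fun t : ℝ => if t < R then 4 * ((1 + t ^ 2) ^ 2)⁻¹ else 0) ‖y‖ :=
        integral_congr_ae (Filter.Eventually.of_forall heq)
    _ = 4 * π ^ 2 * (Real.log (1 + R ^ 2) + (1 + R ^ 2)⁻¹ - 1) := by
        rw [hpolar]
        simp only [finrank_euclideanSpace_fin, measureReal_def, vol_ball_E4]
        rw [show (4 : ℕ) - 1 = 3 from rfl]
        rw [oneDim R hR]
        push_cast [nsmul_eq_mul, smul_eq_mul]
        ring

def negB (R : ℝ) : Set (Fin 4 → ℝ) := bigB R ∩ {x | x 3 < 0}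

lemma measurableSet_negB (R : ℝ) : MeasurableSet (negB R) :=
  (measurableSet_bigB R).inter (measurableSet_lt (by fun_prop) measurable_const)

lemma integral_negB_eq (R : ℝ) : ∫ x in negB R, G0 x = ∫ x in hBall R, G0 x := by
  have hmp : MeasurePreserving (Neg.neg : (Fin 4 → ℝ) → (Fin 4 → ℝ)) volume volume :=
    Measure.measurePreserving_neg volume
  have key := hmp.setIntegral_preimage_emb measurableEmbedding_neg G0 (negB R)
  have hpre : (Neg.neg : (Fin 4 → ℝ) → (Fin 4 → ℝ)) ⁻¹' (negB R) = hBall R := by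
    ext x
    simp only [Set.mem_preimage, negB, bigB, hBall, Set.mem_inter_iff, Set.mem_setOf_eq,
      Pi.neg_apply, neg_sq, neg_lt, neg_zero]
  rw [hpre] at key
  rw [← key]
  apply setIntegral_congr_fun (measurableSet_hBall R)
  intro x _
  unfold G0
  simp

lemma integral_hBall_G0 (R : ℝ) (hR : 0 < R) :
    ∫ x in hBall R, G0 x = 2 * π ^ 2 * (Real.log (1 + R ^ 2) + (1 + R ^ 2)⁻¹ - 1) := by
  have hnull : volume {x : Fin 4 → ℝ | x 3 = 0} = 0 := by
    rw [volume_pi]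
    exact Measure.pi_hyperplane _ 3 0
  have haeq : bigB R =ᵐ[volume] ((hBall R ∪ negB R : Set (Fin 4 → ℝ))) := by
    rw [ae_eq_set]
    constructor
    · apply measure_mono_null _ hnull
      intro x hx
      obtain ⟨hxB, hxn⟩ := hx
      simp only [Set.mem_setOf_eq]
      by_contra hne
      rcases lt_or_gt_of_ne hne with h | h
      · exact hxn (Or.inr ⟨hxB, h⟩)
      · exact hxn (Or.inl ⟨hxB, h⟩)
    · have : (hBall R ∪ negB R) \ bigB R = ∅ := by
        rw [Set.diff_eq_empty]
        rintro x (hx | hx)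
        · exact hx.1
        · exact hx.1
      rw [this, measure_empty]
  have hdisj : Disjoint (hBall R) (negB R) := by
    rw [Set.disjoint_left]
    rintro x ⟨_, hx⟩ ⟨_, hx'⟩
    exact absurd hx' (not_lt.2 hx.le)
  have hint1 : IntegrableOn G0 (hBall R) := integrableOn_G0 (volume_hBall_lt_top R)
  have hint2 : IntegrableOn G0 (negB R) :=
    integrableOn_G0 (lt_of_le_of_lt (measure_mono Set.inter_subset_left) (volume_bigB_lt_top R))
  have hsplit : ∫ x in bigB R, G0 x = (∫ x in hBall R, G0 x) + ∫ x in negB R, G0 x := by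
    rw [setIntegral_congr_set haeq]
    exact setIntegral_union hdisj (measurableSet_negB R) hint1 hint2
  have := integral_bigB R hR
  rw [hsplit, integral_negB_eq R] at this
  linarith

lemma integrableOn_Wb_sq (R : ℝ) : IntegrableOn (fun x => Wb x ^ 2) (hBall R) := by
  apply Measure.integrableOn_of_bounded (volume_hBall_lt_top R).ne
    measurable_Wb_sq.aestronglyMeasurable (M := 4)
  rw [ae_restrict_iff' (measurableSet_hBall R)]
  filter_upwards with x hx
  rw [Real.norm_eq_abs, abs_of_nonneg (sq_nonneg _)]
  exact le_trans (Wb_sq_le_G0 hx.2) (G0_le_four x)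

set_option maxHeartbeats 1000000 in
lemma hup_lemma (R : ℝ) :
    (∫ x in hBall R, Wb x ^ 2) ≤ ∫ x in hBall R, G0 x :=
  setIntegral_mono_on (integrableOn_Wb_sq R) (integrableOn_G0 (volume_hBall_lt_top R))
    (measurableSet_hBall R) (fun x hx => Wb_sq_le_G0 hx.2)

set_option maxHeartbeats 1000000 in
lemma hlow_aux (R : ℝ) :
    (∫ x in hBall R, (G0 x - Wb x ^ 2)) ≤ ∫ x in hBall R, Hf x := by
  apply setIntegral_mono_on _ integrable_Hf.integrableOn (measurableSet_hBall R)
    (fun x hx => G0_sub_Wb_sq_le_Hf hx.2)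
  exact (integrableOn_G0 (volume_hBall_lt_top R)).sub (integrableOn_Wb_sq R)

lemma hlow_lemma (R : ℝ) :
    (∫ x in hBall R, G0 x) - (∫ x in hBall R, Wb x ^ 2) ≤ ∫ x, Hf x := by
  rw [← integral_sub (integrableOn_G0 (volume_hBall_lt_top R)) (integrableOn_Wb_sq R)]
  calc (∫ x in hBall R, (G0 x - Wb x ^ 2)) ≤ ∫ x in hBall R, Hf x := hlow_aux R
    _ ≤ ∫ x, Hf x := setIntegral_le_integral integrable_Hf (ae_of_all _ Hf_nonneg)

lemma bounds (R : ℝ) (hR : 0 < R) :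
    2 * π ^ 2 * (Real.log (1 + R ^ 2) + (1 + R ^ 2)⁻¹ - 1) - (∫ x, Hf x)
      ≤ (∫ x in hBall R, Wb x ^ 2) ∧
    (∫ x in hBall R, Wb x ^ 2) ≤ 2 * π ^ 2 * (Real.log (1 + R ^ 2) + (1 + R ^ 2)⁻¹ - 1) := by
  have hup := hup_lemma R
  have hlow := hlow_lemma R
  rw [integral_hBall_G0 R hR] at hup hlow
  exact ⟨by linarith, hup⟩

set_option maxHeartbeats 2000000 in
lemma tendsto_main :
    Tendsto (fun R : ℝ => (Real.log R)⁻¹ *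
        (2 * π ^ 2 * (Real.log (1 + R ^ 2) + (1 + R ^ 2)⁻¹ - 1)))
      atTop (nhds (4 * π ^ 2)) := by
  have tinv : Tendsto (fun R : ℝ => (Real.log R)⁻¹) atTop (nhds 0) :=
    Real.tendsto_log_atTop.inv_tendsto_atTop
  have tRsq : Tendsto (fun R : ℝ => ((R ^ 2)⁻¹ : ℝ)) atTop (nhds 0) :=
    (tendsto_pow_atTop (by norm_num)).inv_tendsto_atTop
  have tlog1 : Tendsto (fun R : ℝ => Real.log (1 + (R ^ 2)⁻¹)) atTop (nhds 0) := by
    have h1 : Tendsto (fun R : ℝ => 1 + ((R ^ 2)⁻¹ : ℝ)) atTop (nhds 1) := by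
      simpa using (tendsto_const_nhds (x := (1:ℝ)) (f := atTop)).add tRsq
    have := (Real.continuousAt_log (x := 1) one_ne_zero).tendsto.comp h1
    simpa [Real.log_one, Function.comp_def] using this
  have tinv2 : Tendsto (fun R : ℝ => ((1 + R ^ 2)⁻¹ : ℝ)) atTop (nhds 0) := by
    apply Filter.Tendsto.inv_tendsto_atTop
    apply tendsto_atTop_add_const_left
    exact tendsto_pow_atTop (by norm_num)
  have terr : Tendsto (fun R : ℝ =>
      (Real.log (1 + (R ^ 2)⁻¹) + (1 + R ^ 2)⁻¹ - 1) * (Real.log R)⁻¹) atTop (nhds 0) := by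
    have h := ((tlog1.add tinv2).sub
      (tendsto_const_nhds : Tendsto (fun _ : ℝ => (1:ℝ)) atTop (nhds 1))).mul tinv
    simpa using h
  have tfull : Tendsto (fun R : ℝ => 2 * π ^ 2 *
      (2 + (Real.log (1 + (R ^ 2)⁻¹) + (1 + R ^ 2)⁻¹ - 1) * (Real.log R)⁻¹))
      atTop (nhds (4 * π ^ 2)) := by
    have h := ((tendsto_const_nhds : Tendsto (fun _ : ℝ => (2:ℝ)) atTop (nhds 2)).add terr)
    have h2 := h.const_mul (2 * π ^ 2)
    have h3 : 2 * π ^ 2 * (2 + 0) = 4 * π ^ 2 := by ring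
    rw [h3] at h2
    exact h2
  apply tfull.congr'
  filter_upwards [eventually_ge_atTop (2:ℝ)] with R hR
  have hR1 : (1:ℝ) < R := by linarith
  have hlogpos : 0 < Real.log R := Real.log_pos hR1
  have hR0 : R ≠ 0 := by linarith
  have hsplit : Real.log (1 + R ^ 2) = 2 * Real.log R + Real.log (1 + (R ^ 2)⁻¹) := by
    have h1 : (1 + R ^ 2) = R ^ 2 * (1 + (R ^ 2)⁻¹) := by
      field_simp
      try ring
    rw [h1, Real.log_mul (by positivity) (by positivity), Real.log_pow]
    push_cast
    ring
  rw [hsplit]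
  field_simp
  ring

lemma tendsto_lower :
    Tendsto (fun R : ℝ => (Real.log R)⁻¹ *
        (2 * π ^ 2 * (Real.log (1 + R ^ 2) + (1 + R ^ 2)⁻¹ - 1) - (∫ x, Hf x)))
      atTop (nhds (4 * π ^ 2)) := by
  have tinv : Tendsto (fun R : ℝ => (Real.log R)⁻¹) atTop (nhds 0) :=
    Real.tendsto_log_atTop.inv_tendsto_atTop
  have h := tendsto_main.sub (tinv.mul_const (∫ x, Hf x))
  rw [show (4 : ℝ) * π ^ 2 - 0 * (∫ x, Hf x) = 4 * π ^ 2 by ring] at h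
  apply h.congr
  intro R
  ring

end Stmt18

/-- `lim_{R→∞} (log R)⁻¹ ∫_{B⁴₊(0,R)} W² dx = 4π²`: the `L²` mass of the bubble diverges
logarithmically with rate `4π²`. -/
theorem statement18 :
    Tendsto (fun R : ℝ => (Real.log R)⁻¹ * ∫ x in hBall R, (Wb x) ^ 2)
      atTop (nhds (4 * Real.pi ^ 2)) := by
  apply tendsto_of_tendsto_of_tendsto_of_le_of_le' Stmt18.tendsto_lower Stmt18.tendsto_main
  · filter_upwards [eventually_ge_atTop (2:ℝ)] with R hR
    have hR0 : (0:ℝ) < R := by linarith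
    have hlog : 0 ≤ (Real.log R)⁻¹ := inv_nonneg.2 (Real.log_nonneg (by linarith))
    exact mul_le_mul_of_nonneg_left (Stmt18.bounds R hR0).1 hlog
  · filter_upwards [eventually_ge_atTop (2:ℝ)] with R hR
    have hR0 : (0:ℝ) < R := by linarith
    have hlog : 0 ≤ (Real.log R)⁻¹ := inv_nonneg.2 (Real.log_nonneg (by linarith))
    exact mul_le_mul_of_nonneg_left (Stmt18.bounds R hR0).2 hlog
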